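/- Let f_{Q2}(θ) = (1/3) · [[16, −8(1+e^{iθ})], [−8(1+e^{−iθ}), 14 + 2cos θ]] ∈ ℂ^{2×2}. Then: (i) det f_{Q2}(θ) = (32/3)(1 − cos θ) for all θ; (ii) f_{Q2}(θ) is Hermitian positive definite for every θ ∈ (0, 2π); (iii) the smallest eigenvalue λ_min(f_{Q2}(θ)) of the Hermitian matrix f_{Q2}(θ) satisfies lim_{θ→0} λ_min(f_{Q2}(θ)) / θ² = 1/2, i.e. λ_min(f_{Q2}(·)) has a zero of order 2 at θ₀ = 0. -/

import Mathlib

open Matrix Filter Topology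
open scoped ComplexOrder

/-- The symbol of the `ℚ₂` Lagrangian FEM stiffness matrices. -/
noncomputable def fQ2 (θ : ℝ) : Matrix (Fin 2) (Fin 2) ℂ :=
  (1 / 3 : ℂ) • Matrix.of
    ![![16, -8 * (1 + Complex.exp (Complex.I * θ))],
      ![-8 * (1 + Complex.exp (-(Complex.I) * θ)), 14 + 2 * (Real.cos θ : ℂ)]]

/- Auxiliary lemmas -/

lemma exp_mul_exp_neg (θ : ℝ) :
    Complex.exp (Complex.I * θ) * Complex.exp (-(Complex.I) * θ) = 1 := by
  rw [← Complex.exp_add]; ring_nf; exact Complex.exp_zero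

lemma exp_add_exp_neg (θ : ℝ) :
    Complex.exp (Complex.I * θ) + Complex.exp (-(Complex.I) * θ)
      = 2 * Complex.cos θ := by
  rw [Complex.cos]
  ring_nf

lemma rcl (x : ℝ) : (RCLike.ofReal x : ℂ) = Complex.ofReal x := rfl

lemma det_fQ2 (θ : ℝ) :
    (fQ2 θ).det = ((32 / 3 : ℝ) : ℂ) * (1 - (Real.cos θ : ℂ)) := by
  have h1 := exp_mul_exp_neg θ
  have h2 := exp_add_exp_neg θ
  simp only [fQ2, Matrix.det_fin_two, Matrix.smul_apply, Matrix.of_apply,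
    Matrix.cons_val', Matrix.cons_val_zero, Matrix.cons_val_one, Matrix.head_cons,
    Matrix.empty_val', Matrix.cons_val_fin_one, Matrix.head_fin_const, smul_eq_mul]
  push_cast
  linear_combination (-(64:ℂ)/9) * h1 + (-(64:ℂ)/9) * h2

lemma trace_fQ2 (θ : ℝ) :
    (fQ2 θ).trace = (((30 + 2 * Real.cos θ) / 3 : ℝ) : ℂ) := by
  simp only [fQ2, Matrix.trace_fin_two, Matrix.smul_apply, Matrix.of_apply,
    Matrix.cons_val', Matrix.cons_val_zero, Matrix.cons_val_one, Matrix.head_cons,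
    Matrix.empty_val', Matrix.cons_val_fin_one, smul_eq_mul, Matrix.vecHead,
    Matrix.vecTail]
  push_cast
  ring

lemma trace_eq_sum_eigs {n : Type*} [Fintype n] [DecidableEq n]
    {A : Matrix n n ℂ} (hA : A.IsHermitian) :
    A.trace = ∑ i, (hA.eigenvalues i : ℂ) := by
  conv_lhs => rw [hA.spectral_theorem]
  rw [Unitary.conjStarAlgAut_apply, Matrix.trace_mul_cycle, Unitary.coe_star_mul_self, one_mul,
    Matrix.trace_diagonal]
  simp

lemma posDef_of_posSemidef_det_ne_zero {n : Type*} [Fintype n] [DecidableEq n]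
    {A : Matrix n n ℂ} (h : A.PosSemidef) (hd : A.det ≠ 0) : A.PosDef := by
  refine Matrix.PosDef.of_dotProduct_mulVec_pos h.1 fun x hx => ?_
  have hne : A *ᵥ x ≠ 0 := fun h0 =>
    hd (Matrix.exists_mulVec_eq_zero_iff.mp ⟨x, hx, h0⟩)
  refine lt_of_le_of_ne (h.dotProduct_mulVec_nonneg x) fun heq => ?_
  exact hne ((h.dotProduct_mulVec_zero_iff x).mp heq.symm)

lemma iInf_fin_two (f : Fin 2 → ℝ) : (⨅ i, f i) = min (f 0) (f 1) := by
  have hbdd : BddBelow (Set.range f) := Set.Finite.bddBelow (Set.finite_range f)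
  apply le_antisymm
  · exact le_min (ciInf_le hbdd 0) (ciInf_le hbdd 1)
  · apply le_ciInf
    intro i
    fin_cases i
    · exact min_le_left _ _
    · exact min_le_right _ _

lemma min_eq_formula (a b : ℝ) :
    min a b = ((a + b) - Real.sqrt ((a + b) ^ 2 - 4 * (a * b))) / 2 := by
  have h : (a + b) ^ 2 - 4 * (a * b) = (a - b) ^ 2 := by ring
  rw [h, Real.sqrt_sq_eq_abs]
  rcases le_total a b with h' | h'
  · rw [min_eq_left h', abs_of_nonpos (by linarith)]; ring
  · rw [min_eq_right h', abs_of_nonneg (by linarith)]; ring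

/-- The trace as a real function. -/
noncomputable def Tf (θ : ℝ) : ℝ := (30 + 2 * Real.cos θ) / 3

/-- The determinant as a real function. -/
noncomputable def Df (θ : ℝ) : ℝ := 32 / 3 * (1 - Real.cos θ)

lemma discrim_pos (θ : ℝ) : (4:ℝ)/9 ≤ Tf θ ^ 2 - 4 * Df θ := by
  have h1 := Real.neg_one_le_cos θ
  have h2 := Real.cos_le_one θ
  unfold Tf Df
  nlinarith [sq_nonneg (Real.cos θ + 1)]

lemma Tf_pos (θ : ℝ) : (0:ℝ) < Tf θ := by
  have h1 := Real.neg_one_le_cos θ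
  unfold Tf; linarith

lemma eig_sum_prod (hherm : ∀ θ : ℝ, (fQ2 θ).IsHermitian) (θ : ℝ) :
    (hherm θ).eigenvalues 0 + (hherm θ).eigenvalues 1 = Tf θ ∧
    (hherm θ).eigenvalues 0 * (hherm θ).eigenvalues 1 = Df θ := by
  constructor
  · have h := trace_eq_sum_eigs (hherm θ)
    rw [trace_fQ2, Fin.sum_univ_two] at h
    apply Complex.ofReal_injective
    push_cast [Tf] at h ⊢
    linear_combination -h
  · have h := (hherm θ).det_eq_prod_eigenvalues
    rw [det_fQ2, Fin.prod_univ_two] at h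
    rw [rcl, rcl] at h
    apply Complex.ofReal_injective
    push_cast [Df] at h ⊢
    linear_combination -h

lemma one_sub_cos_div_sq (θ : ℝ) :
    Tendsto (fun θ : ℝ => (1 - Real.cos θ) / θ ^ 2) (𝓝[≠] 0) (𝓝 (1 / 2)) := by
  have hslope : Tendsto (fun x : ℝ => Real.sin x / x) (𝓝[≠] 0) (𝓝 1) := by
    have h := (Real.hasDerivAt_sin 0)
    rw [hasDerivAt_iff_tendsto_slope, Real.cos_zero] at h
    apply h.congr
    intro x
    simp [slope_def_field]
  have hhalf : Tendsto (fun θ : ℝ => θ / 2) (𝓝[≠] 0) (𝓝[≠] 0) := by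
    apply tendsto_nhdsWithin_of_tendsto_nhds_of_eventually_within
    · have : Tendsto (fun θ : ℝ => θ / 2) (𝓝 0) (𝓝 (0 / 2)) :=
        tendsto_id.div_const 2
      simpa using this.mono_left nhdsWithin_le_nhds
    · filter_upwards [self_mem_nhdsWithin] with x hx
      simpa using div_ne_zero hx two_ne_zero
  have hsin2 : Tendsto (fun θ : ℝ => Real.sin (θ / 2) / (θ / 2)) (𝓝[≠] 0) (𝓝 1) :=
    hslope.comp hhalf
  have hfin : Tendsto (fun θ : ℝ =>
      (1 / 2) * (Real.sin (θ / 2) / (θ / 2)) ^ 2) (𝓝[≠] 0) (𝓝 ((1 / 2) * 1 ^ 2)) :=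
    tendsto_const_nhds.mul ((hsin2.pow 2))
  rw [show ((1:ℝ)/2) * 1 ^ 2 = 1/2 by norm_num] at hfin
  apply hfin.congr'
  filter_upwards [self_mem_nhdsWithin] with x hx
  have hx0 : x ≠ 0 := hx
  have hcos : Real.cos x = 1 - 2 * Real.sin (x / 2) ^ 2 := by
    have h1 := Real.sin_sq_add_cos_sq (x / 2)
    have h2 := Real.cos_two_mul (x / 2)
    rw [show 2 * (x / 2) = x by ring] at h2
    nlinarith
  rw [hcos]
  field_simp
  ring

/-- (i) `det f_{Q2}(θ) = (32/3)(1 - cos θ)`; (ii) `f_{Q2}(θ)` is HPD on `(0,2π)`;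
(iii) the minimal eigenvalue of `f_{Q2}(θ)` has a zero of order `2` at `θ₀ = 0`,
with `λ_min(f_{Q2}(θ))/θ² → 1/2`. -/
theorem stmt16 (hherm : ∀ θ : ℝ, (fQ2 θ).IsHermitian) :
    (∀ θ : ℝ, (fQ2 θ).det = ((32 / 3 : ℝ) : ℂ) * (1 - (Real.cos θ : ℂ))) ∧
    (∀ θ : ℝ, 0 < θ → θ < 2 * Real.pi → (fQ2 θ).PosDef) ∧
    Tendsto (fun θ : ℝ => (⨅ i, (hherm θ).eigenvalues i) / θ ^ 2)
      (𝓝[≠] 0) (𝓝 (1 / 2)) := by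
  refine ⟨det_fQ2, ?_, ?_⟩
  · -- positive definiteness
    intro θ hθ0 hθ2
    have hc : Real.cos θ < 1 := by
      refine lt_of_le_of_ne (Real.cos_le_one θ) ?_
      intro h
      have := (Real.cos_eq_one_iff_of_lt_of_lt (by linarith [Real.pi_pos]) hθ2).mp h
      exact absurd this (ne_of_gt hθ0)
    have hD : 0 < Df θ := by unfold Df; nlinarith
    obtain ⟨hsum, hprod⟩ := eig_sum_prod hherm θ
    have hT := Tf_pos θ
    have h0 : 0 < (hherm θ).eigenvalues 0 := by nlinarith
    have h1 : 0 < (hherm θ).eigenvalues 1 := by nlinarith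
    have hpsd : (fQ2 θ).PosSemidef := by
      apply (hherm θ).posSemidef_iff_eigenvalues_nonneg.mpr
      intro i; fin_cases i
      · exact h0.le
      · exact h1.le
    apply posDef_of_posSemidef_det_ne_zero hpsd
    rw [det_fQ2]
    intro h
    have h' : (32 / 3 * (1 - Real.cos θ) : ℝ) = 0 := by
      apply Complex.ofReal_injective
      push_cast at h ⊢
      linear_combination h
    nlinarith
  · -- the limit
    have heq : ∀ θ : ℝ, (⨅ i, (hherm θ).eigenvalues i)
        = (Tf θ - Real.sqrt (Tf θ ^ 2 - 4 * Df θ)) / 2 := by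
      intro θ
      obtain ⟨hsum, hprod⟩ := eig_sum_prod hherm θ
      rw [iInf_fin_two, min_eq_formula, hsum, hprod]
    simp only [heq]
    -- rewrite as 2 * (D/θ²) / (T + sqrt(T² - 4D)) for θ ≠ 0
    have hD16 : Tendsto (fun θ : ℝ => Df θ / θ ^ 2) (𝓝[≠] 0) (𝓝 (16 / 3)) := by
      have h := (one_sub_cos_div_sq 0).const_mul (32 / 3 : ℝ)
      rw [show (32 / 3 : ℝ) * (1 / 2) = 16 / 3 by norm_num] at h
      apply h.congr
      intro x; unfold Df; ring
    have hTs : Tendsto (fun θ : ℝ => Tf θ + Real.sqrt (Tf θ ^ 2 - 4 * Df θ))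
        (𝓝[≠] 0) (𝓝 (64 / 3)) := by
      have hcont : ContinuousAt
          (fun θ : ℝ => Tf θ + Real.sqrt (Tf θ ^ 2 - 4 * Df θ)) 0 := by
        apply ContinuousAt.add
        · exact (((continuous_const.add
            (continuous_const.mul Real.continuous_cos)).div_const 3).continuousAt)
        · apply Real.continuous_sqrt.continuousAt.comp
          apply ContinuousAt.sub
          · exact ((((continuous_const.add
              (continuous_const.mul Real.continuous_cos)).div_const 3).pow 2).continuousAt)
          · exact (continuous_const.mul ((continuous_const.mul
              (continuous_const.sub Real.continuous_cos)))).continuousAt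
      have hval : Tf 0 + Real.sqrt (Tf 0 ^ 2 - 4 * Df 0) = 64 / 3 := by
        have hT0 : Tf 0 = 32 / 3 := by unfold Tf; rw [Real.cos_zero]; norm_num
        have hD0 : Df 0 = 0 := by unfold Df; rw [Real.cos_zero]; ring
        rw [hT0, hD0]
        rw [show (32 / 3 : ℝ) ^ 2 - 4 * 0 = (32 / 3) ^ 2 by ring,
          Real.sqrt_sq (by norm_num)]
        norm_num
      have := hcont.tendsto
      rw [hval] at this
      exact this.mono_left nhdsWithin_le_nhds
    have hfin : Tendsto (fun θ : ℝ =>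
        2 * (Df θ / θ ^ 2) / (Tf θ + Real.sqrt (Tf θ ^ 2 - 4 * Df θ)))
        (𝓝[≠] 0) (𝓝 (2 * (16 / 3) / (64 / 3))) :=
      (tendsto_const_nhds.mul hD16).div hTs (by norm_num)
    rw [show (2 * ((16:ℝ) / 3) / (64 / 3)) = 1 / 2 by norm_num] at hfin
    apply hfin.congr'
    filter_upwards [self_mem_nhdsWithin] with θ hθ
    have hθ0 : θ ≠ 0 := hθ
    set s := Real.sqrt (Tf θ ^ 2 - 4 * Df θ) with hs
    have hdis := discrim_pos θ
    have hs2 : s ^ 2 = Tf θ ^ 2 - 4 * Df θ := Real.sq_sqrt (by linarith)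
    have hsnn : 0 ≤ s := Real.sqrt_nonneg _
    have hT := Tf_pos θ
    have hden : Tf θ + s ≠ 0 := by positivity
    have hθ2 : θ ^ 2 ≠ 0 := pow_ne_zero 2 hθ0
    field_simp
    nlinarith [hs2]
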